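/- Let σ ∈ S_k and τ ∈ S_n with σ ≤ τ in the permutation pattern poset P. If the pair (σ, τ) has an interval block, i.e., τ has an interval block that is disjoint from every occurrence of σ in τ, then the Möbius function of the interval [σ, τ] in P satisfies μ(σ, τ) = 0. -/

import Mathlib

/-- `f` gives an occurrence of the pattern `σ` in `τ`: the positions `f 0 < f 1 < ⋯`
carry letters of `τ` in the same relative order as `σ`. -/
def IsOccurrence {k n : ℕ} (σ : Equiv.Perm (Fin k)) (τ : Equiv.Perm (Fin n))
    (f : Fin k → Fin n) : Prop :=
  StrictMono f ∧ ∀ i j : Fin k, σ i < σ j ↔ τ (f i) < τ (f j)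

/-- Two sets of kept positions `S, S'` (each containing the marked positions `A`)
determine the same element of the occurrence poset: the words of `τ` read along `S`
and along `S'` are order isomorphic, with the marked positions corresponding. -/
def OccEquiv {n : ℕ} (τ : Equiv.Perm (Fin n)) (A S S' : Finset (Fin n)) : Prop :=
  ∃ g : {x // x ∈ S} ≃o {x // x ∈ S'},
    (∀ a b : {x // x ∈ S}, τ a.1 < τ b.1 ↔ τ (g a).1 < τ (g b).1) ∧
    (∀ a : {x // x ∈ S}, a.1 ∈ A ↔ (g a).1 ∈ A)

/-- Representatives of elements of the occurrence poset with marked positions `A`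
and ground set `U`: sets of kept positions between `A` and `U`. -/
def OccCarrier {n : ℕ} (A U : Finset (Fin n)) := {S : Finset (Fin n) // A ⊆ S ∧ S ⊆ U}

/-- The occurrence poset `[⟨σ⟩, τ]` (with ground set `U`): kept-position sets modulo
order isomorphism respecting the marked occurrence. -/
def OccPoset {n : ℕ} (τ : Equiv.Perm (Fin n)) (A U : Finset (Fin n)) :=
  Quot (fun S S' : OccCarrier A U => OccEquiv τ A S.1 S'.1)

def occMk {n : ℕ} (τ : Equiv.Perm (Fin n)) (A U : Finset (Fin n)) (S : OccCarrier A U) :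
    OccPoset τ A U :=
  Quot.mk _ S

/-- The partial order of the occurrence poset: deletion of unmarked letters. -/
def occLE {n : ℕ} (τ : Equiv.Perm (Fin n)) (A U : Finset (Fin n))
    (q q' : OccPoset τ A U) : Prop :=
  ∃ S S' : OccCarrier A U, q = occMk τ A U S ∧ q' = occMk τ A U S' ∧ S.1 ⊆ S'.1

/-- The bottom element `⟨σ⟩` of the occurrence poset. -/
def occBot {n : ℕ} (τ : Equiv.Perm (Fin n)) (A U : Finset (Fin n)) (h : A ⊆ U) :
    OccPoset τ A U :=
  occMk τ A U ⟨A, subset_rfl, h⟩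

/-- The top element `τ` of the occurrence poset. -/
def occTop {n : ℕ} (τ : Equiv.Perm (Fin n)) (A U : Finset (Fin n)) (h : A ⊆ U) :
    OccPoset τ A U :=
  occMk τ A U ⟨U, h, subset_rfl⟩

/-- `J` is an interval block of the pattern of `τ` restricted to the kept positions `S`:
`J` consists of at least two kept positions, consecutive among `S` both in position and
in value. -/
def IsBlockIn {n : ℕ} (τ : Equiv.Perm (Fin n)) (S J : Finset (Fin n)) : Prop :=
  J ⊆ S ∧ 2 ≤ J.card ∧
    (∀ x ∈ J, ∀ y ∈ J, ∀ z ∈ S, x ≤ z → z ≤ y → z ∈ J) ∧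
    (∀ x ∈ J, ∀ y ∈ J, ∀ z ∈ S, τ x ≤ τ z → τ z ≤ τ y → z ∈ J)

/-- The pair (marked occurrence `A`, permutation given by kept positions `S`) has an
interval block: an interval block disjoint from the occurrence. -/
def PairHasBlock {n : ℕ} (τ : Equiv.Perm (Fin n)) (A S : Finset (Fin n)) : Prop :=
  ∃ J : Finset (Fin n), IsBlockIn τ S J ∧ ∀ p ∈ J, p ∉ A

/-- An element of the occurrence poset is interval free if (a representative of) it has
no interval block disjoint from the marked occurrence. -/
def occIntervalFree {n : ℕ} (τ : Equiv.Perm (Fin n)) (A U : Finset (Fin n))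
    (q : OccPoset τ A U) : Prop :=
  ∃ S : OccCarrier A U, q = occMk τ A U S ∧ ¬ PairHasBlock τ A S.1

theorem OccEquiv.card_eq {n : ℕ} {τ : Equiv.Perm (Fin n)} {A S S' : Finset (Fin n)}
    (h : OccEquiv τ A S S') : S.card = S'.card := by
  obtain ⟨g, -, -⟩ := h
  simpa using Fintype.card_congr g.toEquiv

/-- The rank of an element of the occurrence poset: its number of letters minus `k`. -/
def occRank {n : ℕ} (τ : Equiv.Perm (Fin n)) (A U : Finset (Fin n)) (k : ℕ) :
    OccPoset τ A U → ℕ :=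
  Quot.lift (fun S => S.1.card - k) (fun S S' h => by
    have hc := OccEquiv.card_eq h
    show S.1.card - k = S'.1.card - k
    omega)

/-- Positions `p` and `q` lie in the same region: no position between them (inclusive)
is a marked position. -/
def SameRegion {n : ℕ} (A : Finset (Fin n)) (p q : Fin n) : Prop :=
  ∀ z : Fin n, min p q ≤ z → z ≤ max p q → z ∉ A

/-- The pair (occurrence with marked positions `A`, `τ`) is separated: any two letters in
the same region are separated in value by a letter of the occurrence. -/
def Separated {n : ℕ} (τ : Equiv.Perm (Fin n)) (A : Finset (Fin n)) : Prop :=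
  ∀ p q : Fin n, SameRegion A p q → τ p < τ q → ∃ a ∈ A, τ p < τ a ∧ τ a < τ q

/-- The letters at positions `p, q` (with `τ p < τ q`) are similar: same region, and no
letter of the occurrence lies strictly between them in value. -/
def SimilarPos {n : ℕ} (τ : Equiv.Perm (Fin n)) (A : Finset (Fin n)) (p q : Fin n) : Prop :=
  SameRegion A p q ∧ τ p < τ q ∧ ∀ a ∈ A, ¬ (τ p < τ a ∧ τ a < τ q)

/-- A group of similar letters: at least two letters, pairwise similar. -/
def IsSimilarGroup {n : ℕ} (τ : Equiv.Perm (Fin n)) (A : Finset (Fin n))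
    (G : Finset (Fin n)) : Prop :=
  2 ≤ G.card ∧ ∀ p ∈ G, ∀ q ∈ G, τ p < τ q → SimilarPos τ A p q

/-- A maximal group of similar letters: one contained in no strictly larger group. -/
def IsMaxSimilarGroup {n : ℕ} (τ : Equiv.Perm (Fin n)) (A : Finset (Fin n))
    (G : Finset (Fin n)) : Prop :=
  IsSimilarGroup τ A G ∧ ∀ G' : Finset (Fin n), IsSimilarGroup τ A G' → G ⊆ G' → G' = G

/-- The occurrence poset is a boolean algebra: isomorphic to the poset of all subsets of
a finite set, ordered by inclusion. -/
def IsBooleanOccPoset {n : ℕ} (τ : Equiv.Perm (Fin n)) (A U : Finset (Fin n)) : Prop :=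
  ∃ (m : ℕ) (e : OccPoset τ A U ≃ Finset (Fin m)),
    ∀ q q' : OccPoset τ A U, occLE τ A U q q' ↔ e q ⊆ e q'

/-- The pattern poset `P`: permutations of every length, a permutation of length `m` being
an element of `Equiv.Perm (Fin m)` (its standard form). -/
def PatternPoset := Σ m : ℕ, Equiv.Perm (Fin m)

/-- The order of the pattern poset: pattern containment. -/
def patternLE (a b : PatternPoset) : Prop :=
  ∃ f : Fin a.1 → Fin b.1, IsOccurrence a.2 b.2 f

/-- `b` covers `a` in the pattern poset: `a < b` and `b` has one letter more than `a`. -/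
def patternCovers (a b : PatternPoset) : Prop :=
  patternLE a b ∧ a ≠ b ∧ b.1 = a.1 + 1




namespace MobiusBlockAux

open Finset


lemma finStrictMono_id {n : ℕ} {f : Fin n → Fin n} (hf : StrictMono f) : ∀ i, f i = i := by
  intro i
  have inst1 : WellFoundedLT (Fin n) := inferInstance
  have inst2 : WellFoundedGT (Fin n) := inferInstance
  have h1 := @StrictMono.le_apply (Fin n) (inferInstance : LinearOrder (Fin n)) inst1 f hf i
  have h2 := @StrictMono.apply_le (Fin n) (inferInstance : LinearOrder (Fin n)) inst2 f hf i
  exact le_antisymm h2 h1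

lemma perm_eq_of_order {n : ℕ} {ξ τ : Equiv.Perm (Fin n)}
    (h : ∀ i j, ξ i < ξ j ↔ τ i < τ j) : ξ = τ := by
  have hm : StrictMono (fun v => τ (ξ.symm v)) := by
    intro u v huv
    exact (h (ξ.symm u) (ξ.symm v)).mp (by simpa using huv)
  have hid := finStrictMono_id hm
  ext i
  have h3 := hid (ξ i)
  simp only [Equiv.symm_apply_apply] at h3
  exact congrArg Fin.val h3.symm


lemma patternLE_refl (a : PatternPoset) : patternLE a a :=
  ⟨id, strictMono_id, fun _ _ => Iff.rfl⟩

lemma patternLE_trans {a b c : PatternPoset} (h1 : patternLE a b) (h2 : patternLE b c) :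
    patternLE a c := by
  obtain ⟨f, hf, hfo⟩ := h1
  obtain ⟨g, hg, hgo⟩ := h2
  exact ⟨g ∘ f, hg.comp hf, fun i j => (hfo i j).trans (hgo _ _)⟩

lemma patternLE_len {a b : PatternPoset} (h : patternLE a b) : a.1 ≤ b.1 := by
  obtain ⟨f, hf, -⟩ := h
  simpa using Fintype.card_le_of_injective f hf.injective

section restrict

variable {n : ℕ} (τ : Equiv.Perm (Fin n)) (S : Finset (Fin n))

lemma card_image_perm : (S.image (τ : Fin n → Fin n)).card = S.card :=
  card_image_of_injective _ τ.injective

noncomputable def restFun : Fin S.card → Fin S.card := fun i =>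
  ((S.image (τ : Fin n → Fin n)).orderIsoOfFin (card_image_perm τ S)).symm
    ⟨τ ((S.orderIsoOfFin rfl i : {x // x ∈ S}) : Fin n),
      mem_image_of_mem _ (S.orderIsoOfFin rfl i).2⟩

lemma restFun_lt_iff (i j : Fin S.card) :
    restFun τ S i < restFun τ S j ↔
      τ ((S.orderIsoOfFin rfl i : {x // x ∈ S}) : Fin n) <
        τ ((S.orderIsoOfFin rfl j : {x // x ∈ S}) : Fin n) := by
  rw [restFun, restFun, OrderIso.lt_iff_lt]
  exact Iff.rfl

lemma restFun_inj : Function.Injective (restFun τ S) := by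
  intro i j hij
  rcases lt_trichotomy i j with h | h | h
  · exfalso
    have h2 : (S.orderIsoOfFin rfl i : {x // x ∈ S}) < S.orderIsoOfFin rfl j := by
      exact (S.orderIsoOfFin rfl).lt_iff_lt.mpr h
    have h3 : ((S.orderIsoOfFin rfl i : {x // x ∈ S}) : Fin n) ≠
        ((S.orderIsoOfFin rfl j : {x // x ∈ S}) : Fin n) :=
      fun he => absurd (Subtype.ext he) h2.ne
    have h4 : τ ((S.orderIsoOfFin rfl i : {x // x ∈ S}) : Fin n) ≠
        τ ((S.orderIsoOfFin rfl j : {x // x ∈ S}) : Fin n) := fun he => h3 (τ.injective he)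
    rcases h4.lt_or_gt with h5 | h5
    · exact absurd hij (ne_of_lt ((restFun_lt_iff τ S i j).mpr h5))
    · exact absurd hij.symm (ne_of_lt ((restFun_lt_iff τ S j i).mpr h5))
  · exact h
  · exfalso
    have h2 : (S.orderIsoOfFin rfl j : {x // x ∈ S}) < S.orderIsoOfFin rfl i :=
      (S.orderIsoOfFin rfl).lt_iff_lt.mpr h
    have h3 : ((S.orderIsoOfFin rfl j : {x // x ∈ S}) : Fin n) ≠
        ((S.orderIsoOfFin rfl i : {x // x ∈ S}) : Fin n) :=
      fun he => absurd (Subtype.ext he) h2.ne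
    have h4 : τ ((S.orderIsoOfFin rfl j : {x // x ∈ S}) : Fin n) ≠
        τ ((S.orderIsoOfFin rfl i : {x // x ∈ S}) : Fin n) := fun he => h3 (τ.injective he)
    rcases h4.lt_or_gt with h5 | h5
    · exact absurd hij.symm (ne_of_lt ((restFun_lt_iff τ S j i).mpr h5))
    · exact absurd hij (ne_of_lt ((restFun_lt_iff τ S i j).mpr h5))

noncomputable def restrictPerm : Equiv.Perm (Fin S.card) :=
  Equiv.ofBijective _ ((Finite.injective_iff_bijective).mp (restFun_inj τ S))

lemma restrictPerm_apply (i : Fin S.card) : restrictPerm τ S i = restFun τ S i := rfl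

/-- restriction is ≤ τ -/
lemma restrict_le : patternLE ⟨S.card, restrictPerm τ S⟩ ⟨n, τ⟩ := by
  refine ⟨fun i => ((S.orderIsoOfFin rfl i : {x // x ∈ S}) : Fin n), ?_, ?_⟩
  · intro i j hij
    exact Subtype.coe_lt_coe.mpr ((S.orderIsoOfFin rfl).lt_iff_lt.mpr hij)
  · intro i j
    show restrictPerm τ S i < restrictPerm τ S j ↔ _
    rw [restrictPerm_apply, restrictPerm_apply, restFun_lt_iff]

/-- embedding with image in S factors through the restriction -/
lemma le_restrict {m : ℕ} (ξ : Equiv.Perm (Fin m)) (g : Fin m → Fin n)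
    (hg : StrictMono g) (hord : ∀ i j, ξ i < ξ j ↔ τ (g i) < τ (g j))
    (himg : ∀ i, g i ∈ S) : patternLE ⟨m, ξ⟩ ⟨S.card, restrictPerm τ S⟩ := by
  refine ⟨fun i => (S.orderIsoOfFin rfl).symm ⟨g i, himg i⟩, ?_, ?_⟩
  · intro i j hij
    exact (S.orderIsoOfFin rfl).symm.lt_iff_lt.mpr (Subtype.mk_lt_mk.mpr (hg hij))
  · intro i j
    show ξ i < ξ j ↔ restrictPerm τ S _ < restrictPerm τ S _
    rw [restrictPerm_apply, restrictPerm_apply, restFun_lt_iff]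
    simp only [OrderIso.apply_symm_apply]
    exact hord i j

end restrict



lemma free_le_contract {n m k : ℕ} {τ : Equiv.Perm (Fin n)} {σ : Equiv.Perm (Fin k)}
    {J : Finset (Fin n)}
    (hJpos : ∀ x ∈ J, ∀ y ∈ J, ∀ z : Fin n, x ≤ z → z ≤ y → z ∈ J)
    (hJval : ∀ x ∈ J, ∀ y ∈ J, ∀ z : Fin n, τ x ≤ τ z → τ z ≤ τ y → z ∈ J)
    (hJdisj : ∀ f : Fin k → Fin n, IsOccurrence σ τ f → ∀ i, f i ∉ J)
    {j0 : Fin n} (hj0 : j0 ∈ J)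
    (ξ : Equiv.Perm (Fin m)) (g : Fin m → Fin n) (hg : StrictMono g)
    (hord : ∀ i j, ξ i < ξ j ↔ τ (g i) < τ (g j))
    (hfree : ¬ ∃ J' : Finset (Fin m), IsBlockIn ξ Finset.univ J' ∧
      ∀ f : Fin k → Fin m, IsOccurrence σ ξ f → ∀ i, f i ∉ J') :
    ∃ g' : Fin m → Fin n, StrictMono g' ∧ (∀ i j, ξ i < ξ j ↔ τ (g' i) < τ (g' j)) ∧
      ∀ i, g' i ∉ J ∨ g' i = j0 := by
  classical
  set P : Finset (Fin m) := Finset.univ.filter (fun i => g i ∈ J) with hPdef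
  have hle_ord : ∀ i j, ξ i ≤ ξ j ↔ τ (g i) ≤ τ (g j) := by
    intro i j
    rw [← not_lt, ← not_lt, not_iff_not]
    exact hord j i
  by_cases hP : 2 ≤ P.card
  · exfalso
    refine hfree ⟨P, ⟨subset_univ P, hP, ?_, ?_⟩, ?_⟩
    · intro x hx y hy z _ hxz hzy
      rw [hPdef, mem_filter] at hx hy ⊢
      exact ⟨mem_univ z, hJpos (g x) hx.2 (g y) hy.2 (g z) (hg.monotone hxz) (hg.monotone hzy)⟩
    · intro x hx y hy z _ h1 h2
      rw [hPdef, mem_filter] at hx hy ⊢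
      exact ⟨mem_univ z, hJval (g x) hx.2 (g y) hy.2 (g z)
        ((hle_ord x z).mp h1) ((hle_ord z y).mp h2)⟩
    · intro f hf i
      have hocc : IsOccurrence σ τ (g ∘ f) :=
        ⟨hg.comp hf.1, fun a b => (hf.2 a b).trans (hord _ _)⟩
      have := hJdisj (g ∘ f) hocc i
      rw [hPdef, mem_filter]
      exact fun h => this h.2
  · push_neg at hP
    have huniq : ∀ i i', g i ∈ J → g i' ∈ J → i = i' := by
      intro i i' hi hi'
      by_contra hne
      have h1 : ({i, i'} : Finset (Fin m)) ⊆ P := by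
        intro x hx
        rw [mem_insert, mem_singleton] at hx
        rcases hx with rfl | rfl <;> simp [hPdef, hi, hi']
      have := card_le_card h1
      rw [card_pair hne] at this
      omega
    have hcmp_pos : ∀ p ∈ J, ∀ q, q ∉ J → ((q < p ↔ q < j0) ∧ (p < q ↔ j0 < q)) := by
      intro p hp q hq
      refine ⟨⟨?_, ?_⟩, ⟨?_, ?_⟩⟩
      · intro h; by_contra h2; push_neg at h2
        exact hq (hJpos j0 hj0 p hp q h2 h.le)
      · intro h; by_contra h2; push_neg at h2
        exact hq (hJpos p hp j0 hj0 q h2 h.le)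
      · intro h; by_contra h2; push_neg at h2
        exact hq (hJpos p hp j0 hj0 q h.le h2)
      · intro h; by_contra h2; push_neg at h2
        exact hq (hJpos j0 hj0 p hp q h.le h2)
    have hcmp_val : ∀ p ∈ J, ∀ q, q ∉ J →
        ((τ q < τ p ↔ τ q < τ j0) ∧ (τ p < τ q ↔ τ j0 < τ q)) := by
      intro p hp q hq
      refine ⟨⟨?_, ?_⟩, ⟨?_, ?_⟩⟩
      · intro h; by_contra h2; push_neg at h2
        exact hq (hJval j0 hj0 p hp q h2 h.le)
      · intro h; by_contra h2; push_neg at h2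
        exact hq (hJval p hp j0 hj0 q h2 h.le)
      · intro h; by_contra h2; push_neg at h2
        exact hq (hJval p hp j0 hj0 q h.le h2)
      · intro h; by_contra h2; push_neg at h2
        exact hq (hJval j0 hj0 p hp q h.le h2)
    refine ⟨fun i => if g i ∈ J then j0 else g i, ?_, ?_, ?_⟩
    · intro i j hij
      by_cases hi : g i ∈ J <;> by_cases hj : g j ∈ J
      · exact absurd (huniq i j hi hj) hij.ne
      · simp only [if_pos hi, if_neg hj]
        exact ((hcmp_pos (g i) hi (g j) hj).2).mp (hg hij)
      · simp only [if_neg hi, if_pos hj]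
        exact ((hcmp_pos (g j) hj (g i) hi).1).mp (hg hij)
      · simp only [if_neg hi, if_neg hj]
        exact hg hij
    · intro i j
      rcases eq_or_ne i j with rfl | hne
      · simp
      by_cases hi : g i ∈ J <;> by_cases hj : g j ∈ J
      · exact absurd (huniq i j hi hj) hne
      · simp only [if_pos hi, if_neg hj]
        rw [hord i j]
        exact (hcmp_val (g i) hi (g j) hj).2
      · simp only [if_neg hi, if_pos hj]
        rw [hord i j]
        exact (hcmp_val (g j) hj (g i) hi).1
      · simp only [if_neg hi, if_neg hj]
        exact hord i j
    · intro i
      by_cases h : g i ∈ J <;> simp [h]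

def HasBlk (k : ℕ) (σ : Equiv.Perm (Fin k)) (x : PatternPoset) : Prop :=
  ∃ J : Finset (Fin x.1), IsBlockIn x.2 Finset.univ J ∧
    ∀ f : Fin k → Fin x.1, IsOccurrence σ x.2 f → ∀ i, f i ∉ J

lemma patternLE_eq_of_len {n : ℕ} {τ : Equiv.Perm (Fin n)} {x : PatternPoset}
    (h : patternLE x ⟨n, τ⟩) (hlen : x.1 = n) : x = ⟨n, τ⟩ := by
  obtain ⟨m, ξ⟩ := x
  dsimp at hlen
  subst hlen
  obtain ⟨f, hf, hord⟩ := h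
  have hid := finStrictMono_id hf
  have hxt : ξ = τ := perm_eq_of_order (fun i j => by
    have := hord i j
    rwa [hid i, hid j] at this)
  rw [hxt]

lemma finite_len_le (n : ℕ) : {x : PatternPoset | x.1 ≤ n}.Finite := by
  have h : {x : PatternPoset | x.1 ≤ n} ⊆
      Set.range (fun p : (Σ m : Fin (n+1), Equiv.Perm (Fin m.1)) =>
        (⟨p.1.1, p.2⟩ : PatternPoset)) := by
    rintro ⟨m, ξ⟩ hm
    exact ⟨⟨⟨m, Nat.lt_succ_of_le hm⟩, ξ⟩, rfl⟩
  exact (Set.finite_range _).subset h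

lemma main_aux (mu : PatternPoset → PatternPoset → ℤ)
    (hrec : ∀ a b, patternLE a b → a ≠ b →
      mu a b = - ∑ᶠ x ∈ {x : PatternPoset | patternLE a x ∧ patternLE x b ∧ x ≠ b}, mu a x) :
    ∀ n k (σ : Equiv.Perm (Fin k)) (τ : Equiv.Perm (Fin n)),
      patternLE ⟨k, σ⟩ ⟨n, τ⟩ →
      HasBlk k σ ⟨n, τ⟩ →
      mu ⟨k, σ⟩ ⟨n, τ⟩ = 0 := by
  intro n
  induction n using Nat.strong_induction_on with
  | _ n IH =>
  intro k σ τ hle hblk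
  classical
  obtain ⟨J, hJ, hJdisj⟩ := hblk
  obtain ⟨hJsub, hJ2, hJpos, hJval⟩ := hJ
  have hJpos' : ∀ x ∈ J, ∀ y ∈ J, ∀ z : Fin n, x ≤ z → z ≤ y → z ∈ J :=
    fun x hx y hy z => hJpos x hx y hy z (mem_univ z)
  have hJval' : ∀ x ∈ J, ∀ y ∈ J, ∀ z : Fin n, τ x ≤ τ z → τ z ≤ τ y → z ∈ J :=
    fun x hx y hy z => hJval x hx y hy z (mem_univ z)
  obtain ⟨f0, hf0⟩ := hle
  have himg0 : ∀ i, f0 i ∉ J := hJdisj f0 hf0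
  have hJne : J.Nonempty := card_pos.mp (by omega)
  have hj0 : J.min' hJne ∈ J := J.min'_mem hJne
  set S0 : Finset (Fin n) := (Finset.univ \ J) ∪ {J.min' hJne} with hS0def
  have hJn : J.card ≤ n := by
    have := card_le_card (subset_univ J)
    simpa using this
  have hS0card : S0.card = n - J.card + 1 := by
    rw [hS0def, card_union_of_disjoint (by simp [hj0]), card_sdiff_of_subset (subset_univ J)]
    simp
  have hkcard : k ≤ n - J.card := by
    have h1 : (Finset.univ.image f0).card = k := by
      rw [card_image_of_injective _ hf0.1.injective]
      simp
    have h2 : Finset.univ.image f0 ⊆ Finset.univ \ J := by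
      intro x hx
      obtain ⟨i, -, rfl⟩ := mem_image.mp hx
      simp [himg0 i]
    have h3 := card_le_card h2
    rw [h1, card_sdiff_of_subset (subset_univ J)] at h3
    simpa using h3
  have hks : k < S0.card := by omega
  have hsn : S0.card < n := by omega
  have netop : (⟨k, σ⟩ : PatternPoset) ≠ ⟨n, τ⟩ := by
    intro h
    have := congrArg Sigma.fst h
    dsimp at this
    omega
  have necp : (⟨k, σ⟩ : PatternPoset) ≠ ⟨S0.card, restrictPerm τ S0⟩ := by
    intro h
    have := congrArg Sigma.fst h
    dsimp at this
    omega
  have hτcle : patternLE ⟨S0.card, restrictPerm τ S0⟩ ⟨n, τ⟩ := restrict_le τ S0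
  have hσcp : patternLE ⟨k, σ⟩ ⟨S0.card, restrictPerm τ S0⟩ := by
    refine le_restrict τ S0 σ f0 hf0.1 hf0.2 ?_
    intro i
    rw [hS0def]
    simp [himg0 i]
  have key : ∀ x : PatternPoset, patternLE x ⟨n, τ⟩ → ¬ HasBlk k σ x →
      patternLE x ⟨S0.card, restrictPerm τ S0⟩ := by
    rintro ⟨m, ξ⟩ ⟨g, hg, hord⟩ hfree
    obtain ⟨g', hg', hord', himg'⟩ :=
      free_le_contract hJpos' hJval' hJdisj hj0 ξ g hg hord hfree
    refine le_restrict τ S0 ξ g' hg' hord' ?_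
    intro i
    rw [hS0def]
    rcases himg' i with h | h
    · simp [h]
    · simp [h, hj0]
  -- vanishing of non-free terms by induction
  have hvanish : ∀ x : PatternPoset, patternLE ⟨k, σ⟩ x → x.1 < n → HasBlk k σ x →
      mu ⟨k, σ⟩ x = 0 := by
    rintro ⟨m, ξ⟩ hσx hm hb
    exact IH m hm k σ ξ hσx hb
  -- the three sets
  have hfin1 : {x : PatternPoset | patternLE ⟨k, σ⟩ x ∧ patternLE x ⟨n, τ⟩ ∧
      x ≠ ⟨n, τ⟩}.Finite :=
    (finite_len_le n).subset (fun x hx => patternLE_len hx.2.1)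
  have hfin2 : {x : PatternPoset | patternLE ⟨k, σ⟩ x ∧
      patternLE x ⟨S0.card, restrictPerm τ S0⟩}.Finite :=
    (finite_len_le n).subset (fun x hx => le_trans (patternLE_len hx.2) (le_of_lt hsn))
  have hfin2' : {x : PatternPoset | patternLE ⟨k, σ⟩ x ∧
      patternLE x ⟨S0.card, restrictPerm τ S0⟩ ∧
      x ≠ ⟨S0.card, restrictPerm τ S0⟩}.Finite :=
    hfin2.subset (fun x hx => ⟨hx.1, hx.2.1⟩)
  have hrec1 : mu ⟨k, σ⟩ ⟨n, τ⟩ = - ∑ x ∈ hfin1.toFinset, mu ⟨k, σ⟩ x := by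
    rw [hrec ⟨k, σ⟩ ⟨n, τ⟩ ⟨f0, hf0⟩ netop]
    congr 1
    rw [← finsum_mem_coe_finset]
    exact finsum_mem_congr hfin1.coe_toFinset.symm (fun _ _ => rfl)
  have hrec2 : mu ⟨k, σ⟩ ⟨S0.card, restrictPerm τ S0⟩ =
      - ∑ x ∈ hfin2'.toFinset, mu ⟨k, σ⟩ x := by
    rw [hrec ⟨k, σ⟩ ⟨S0.card, restrictPerm τ S0⟩ hσcp necp]
    congr 1
    rw [← finsum_mem_coe_finset]
    exact finsum_mem_congr hfin2'.coe_toFinset.symm (fun _ _ => rfl)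
  set Fr : PatternPoset → Prop := fun x => ¬ HasBlk k σ x with hFrdef
  -- step 1: restrict the big sum to the free elements
  have step1 : ∑ x ∈ hfin1.toFinset, mu ⟨k, σ⟩ x =
      ∑ x ∈ hfin1.toFinset.filter Fr, mu ⟨k, σ⟩ x := by
    rw [← Finset.sum_filter_add_sum_filter_not hfin1.toFinset Fr]
    have hz : ∑ x ∈ hfin1.toFinset.filter (fun x => ¬ Fr x), mu ⟨k, σ⟩ x = 0 := by
      refine Finset.sum_eq_zero ?_
      intro x hx
      rw [mem_filter] at hx
      have hx1 := hfin1.mem_toFinset.mp hx.1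
      have hlen : x.1 < n :=
        lt_of_le_of_ne (patternLE_len hx1.2.1)
          (fun h => hx1.2.2 (patternLE_eq_of_len hx1.2.1 h))
      exact hvanish x hx1.1 hlen (not_not.mp hx.2)
    rw [hz, add_zero]
  -- step 2: the free parts of the two intervals agree
  have step2 : hfin1.toFinset.filter Fr = hfin2.toFinset.filter Fr := by
    ext x
    simp only [mem_filter, Set.Finite.mem_toFinset, Set.mem_setOf_eq]
    constructor
    · rintro ⟨⟨h1, h2, h3⟩, hf⟩
      exact ⟨⟨h1, key x h2 hf⟩, hf⟩
    · rintro ⟨⟨h1, h2⟩, hf⟩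
      refine ⟨⟨h1, patternLE_trans h2 hτcle, ?_⟩, hf⟩
      intro he
      have hl := patternLE_len h2
      rw [he] at hl
      dsimp at hl
      omega
  -- step 3: the sum over the free part of the contracted interval is the full sum
  have step3 : ∑ x ∈ hfin2.toFinset.filter Fr, mu ⟨k, σ⟩ x =
      ∑ x ∈ hfin2.toFinset, mu ⟨k, σ⟩ x := by
    rw [← Finset.sum_filter_add_sum_filter_not hfin2.toFinset Fr]
    have hz : ∑ x ∈ hfin2.toFinset.filter (fun x => ¬ Fr x), mu ⟨k, σ⟩ x = 0 := by
      refine Finset.sum_eq_zero ?_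
      intro x hx
      rw [mem_filter] at hx
      have hx1 := hfin2.mem_toFinset.mp hx.1
      have hlen : x.1 < n := lt_of_le_of_lt (patternLE_len hx1.2) hsn
      exact hvanish x hx1.1 hlen (not_not.mp hx.2)
    rw [hz, add_zero]
  -- step 4: the full sum over the contracted interval is zero
  have hcpmem : (⟨S0.card, restrictPerm τ S0⟩ : PatternPoset) ∈ hfin2.toFinset := by
    apply hfin2.mem_toFinset.mpr
    exact ⟨hσcp, patternLE_refl _⟩
  have hins : hfin2.toFinset = insert (⟨S0.card, restrictPerm τ S0⟩ : PatternPoset) hfin2'.toFinset := by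
    ext x
    simp only [Set.Finite.mem_toFinset, Set.mem_setOf_eq]
    constructor
    · rintro ⟨h1, h2⟩
      refine Finset.mem_insert.mpr ?_
      by_cases h3 : x = ⟨S0.card, restrictPerm τ S0⟩
      · exact Or.inl h3
      · exact Or.inr (hfin2'.mem_toFinset.mpr ⟨h1, h2, h3⟩)
    · intro hx
      rcases Finset.mem_insert.mp hx with hx | hx
      · subst hx
        exact ⟨hσcp, patternLE_refl _⟩
      · obtain ⟨h1, h2, h3⟩ := hfin2'.mem_toFinset.mp hx
        exact ⟨h1, h2⟩
  have hnotmem : (⟨S0.card, restrictPerm τ S0⟩ : PatternPoset) ∉ hfin2'.toFinset := by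
    intro hm
    obtain ⟨-, -, h⟩ := hfin2'.mem_toFinset.mp hm
    exact h rfl
  have step4 : ∑ x ∈ hfin2.toFinset, mu ⟨k, σ⟩ x = 0 := by
    calc ∑ x ∈ hfin2.toFinset, mu ⟨k, σ⟩ x
        = ∑ x ∈ insert (⟨S0.card, restrictPerm τ S0⟩ : PatternPoset) hfin2'.toFinset,
            mu ⟨k, σ⟩ x := by rw [hins]
      _ = mu ⟨k, σ⟩ ⟨S0.card, restrictPerm τ S0⟩ + ∑ x ∈ hfin2'.toFinset, mu ⟨k, σ⟩ x :=
            Finset.sum_insert hnotmem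
      _ = 0 := by rw [hrec2]; ring
  rw [hrec1, step1, step2, step3, step4]
  ring


end MobiusBlockAux

/-- if the pair `(σ, τ)` has an interval block (an interval block of `τ`
disjoint from every occurrence of `σ` in `τ`), then `μ(σ, τ) = 0` in the pattern poset. -/
theorem mobius_pattern_poset_interval_block {k n : ℕ} (hk : 0 < k)
    (σ : Equiv.Perm (Fin k)) (τ : Equiv.Perm (Fin n))
    (hle : patternLE ⟨k, σ⟩ ⟨n, τ⟩)
    (hblock : ∃ J : Finset (Fin n), IsBlockIn τ Finset.univ J ∧
      ∀ f : Fin k → Fin n, IsOccurrence σ τ f → ∀ i : Fin k, f i ∉ J)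
    (mu : PatternPoset → PatternPoset → ℤ)
    (hone : ∀ a, mu a a = 1)
    (hzero : ∀ a b, ¬ patternLE a b → mu a b = 0)
    (hrec : ∀ a b, patternLE a b → a ≠ b →
      mu a b = - ∑ᶠ x ∈ {x : PatternPoset | patternLE a x ∧ patternLE x b ∧ x ≠ b}, mu a x) :
    mu ⟨k, σ⟩ ⟨n, τ⟩ = 0 :=
  MobiusBlockAux.main_aux mu hrec n k σ τ hle hblock
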